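/- Let u, v ≥ 1 be integers with u + v = n, suppose 4 divides n, and set s = ν_2(n) (so s ≥ 2). If s_2(u) + s_2(v) = s_2(n) + 1 (i.e., there is exactly one carry operation in the addition u + v in base 2), then 2^{s−1} divides both u and v. -/

import Mathlib

lemma aux_div (n u s : ℕ) (hu : 1 ≤ u) (hun : u ≤ n)
    (hc : padicValNat 2 (n.choose u) = 1) (hs : s = padicValNat 2 n) :
    2 ^ (s - 1) ∣ u := by
  have hn : 1 ≤ n := le_trans hu hun
  have key : n * (n - 1).choose (u - 1) = n.choose u * u := by
    have := Nat.add_one_mul_choose_eq (n - 1) (u - 1)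
    have h1 : n - 1 + 1 = n := by omega
    have h2 : u - 1 + 1 = u := by omega
    rwa [h1, h2] at this
  have hC : n.choose u ≠ 0 := (Nat.choose_pos hun).ne'
  have hC' : (n - 1).choose (u - 1) ≠ 0 :=
    (Nat.choose_pos (by omega : u - 1 ≤ n - 1)).ne'
  haveI : Fact (Nat.Prime 2) := ⟨Nat.prime_two⟩
  have hval : padicValNat 2 n + padicValNat 2 ((n - 1).choose (u - 1)) =
      padicValNat 2 (n.choose u) + padicValNat 2 u := by
    rw [← padicValNat.mul (by omega) hC', ← padicValNat.mul hC (by omega), key]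
  have huge : s - 1 ≤ padicValNat 2 u := by omega
  exact dvd_trans (pow_dvd_pow 2 huge) (pow_padicValNat_dvd)

theorem one_carry_implies_divisibility (n u v s : ℕ) (hu : 1 ≤ u) (hv : 1 ≤ v)
    (huv : u + v = n) (h4 : 4 ∣ n) (hs : s = padicValNat 2 n)
    (hdig : (Nat.digits 2 u).sum + (Nat.digits 2 v).sum = (Nat.digits 2 n).sum + 1) :
    2 ^ (s - 1) ∣ u ∧ 2 ^ (s - 1) ∣ v := by
  haveI : Fact (Nat.Prime 2) := ⟨Nat.prime_two⟩
  have hun : u ≤ n := by omega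
  have hvn : v ≤ n := by omega
  have hku : (2 - 1) * padicValNat 2 (n.choose u) =
      (Nat.digits 2 u).sum + (Nat.digits 2 (n - u)).sum - (Nat.digits 2 n).sum :=
    sub_one_mul_padicValNat_choose_eq_sub_sum_digits hun
  have hnu : n - u = v := by omega
  rw [hnu] at hku
  have hsle : (Nat.digits 2 n).sum ≤ (Nat.digits 2 u).sum + (Nat.digits 2 v).sum := by omega
  have hcu : padicValNat 2 (n.choose u) = 1 := by omega
  have hcv : padicValNat 2 (n.choose v) = 1 := by
    have he : n.choose v = n.choose u := by
      rw [← Nat.choose_symm hvn]; congr 1; omega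
    rwa [he]
  exact ⟨aux_div n u s hu hun hcu hs, aux_div n v s hv hvn hcv hs⟩
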